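/- arXiv:1001.1953 — 5 statements merged into one kernel-verified Lean document; each statement's English description precedes it below -/
import Mathlib

section
/- Let G be a finitely generated free abelian group, k a positive integer, and α, α' : G → ℤ surjective homomorphisms such that the mod-2 reductions of k·α and k·α' agree: for all g ∈ G, k·α(g) ≡ k·α'(g) (mod 2). Then there exists an automorphism θ of G such that k·α'(θ(g)) = k·α(g) for all g ∈ G and such that k·α(θ(g)) ≡ k·α(g) (mod 2) for all g. -/
/-- From a surjective functional `α` and a finite linearly independent family spanning
its kernel, build a basis of `G` adapted to `α`. -/
theorem aux_basis {R G : Type*} [CommRing R] [AddCommGroup G] [Module R G]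
    (α : G →ₗ[R] R)
    (hα : Function.Surjective α) {n : ℕ} (w : Fin n → G)
    (hw0 : ∀ i, α (w i) = 0) (hli : LinearIndependent R w)
    (hspan : ∀ g : G, α g = 0 → g ∈ Submodule.span R (Set.range w)) :
    ∃ B : Module.Basis (Option (Fin n)) R G, α (B none) = 1 ∧ ∀ i, α (B (some i)) = 0 := by
  obtain ⟨g₀, hg₀⟩ := hα 1
  set v : Option (Fin n) → G := fun o => o.elim g₀ w with hv
  have hvn : v none = g₀ := rfl
  have hvs : ∀ i, v (some i) = w i := fun i => rfl
  have hli' : LinearIndependent R v := by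
    rw [Fintype.linearIndependent_iff]
    intro c hc
    rw [Fintype.sum_option] at hc
    have hcn : c none = 0 := by
      have h := congrArg α hc
      simpa [map_sum, hg₀, hw0, hvn, hvs, mul_comm] using h
    have hcs : ∀ i, c (some i) = 0 := by
      refine Fintype.linearIndependent_iff.mp hli (fun i => c (some i)) ?_
      rw [hcn] at hc
      simpa [hvn, hvs] using hc
    intro o
    cases o with
    | none => exact hcn
    | some i => exact hcs i
  have hsp : ⊤ ≤ Submodule.span R (Set.range v) := by
    intro g _
    have hker : α (g - α g • g₀) = 0 := by
      simp [hg₀, mul_comm]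
    have hmem1 : g - α g • g₀ ∈ Submodule.span R (Set.range v) := by
      apply Submodule.span_mono (s := Set.range w)
      · rintro x ⟨i, rfl⟩
        exact ⟨some i, rfl⟩
      · exact hspan _ hker
    have hmem2 : α g • g₀ ∈ Submodule.span R (Set.range v) :=
      Submodule.smul_mem _ _ (Submodule.subset_span (show g₀ ∈ Set.range v from ⟨none, rfl⟩))
    have := Submodule.add_mem _ hmem2 hmem1
    simpa using this
  refine ⟨Module.Basis.mk hli' hsp, ?_, fun i => ?_⟩
  · rw [Module.Basis.mk_apply]; exact hg₀
  · rw [Module.Basis.mk_apply]; exact hw0 i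

/-- A finite basis of the kernel of `β` yields a suitable family in `G`. -/
theorem aux_fam {R G : Type*} [CommRing R] [AddCommGroup G] [Module R G]
    (β : G →ₗ[R] R) {m : ℕ}
    (c : Module.Basis (Fin m) R (LinearMap.ker β)) :
    ∃ w : Fin m → G, (∀ i, β (w i) = 0) ∧ LinearIndependent R w ∧
      (∀ g : G, β g = 0 → g ∈ Submodule.span R (Set.range w)) := by
  refine ⟨fun i => ((c i : G)), fun i => LinearMap.mem_ker.mp (c i).2, ?_, ?_⟩
  · exact c.linearIndependent.map' (LinearMap.ker β).subtype (Submodule.ker_subtype _)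
  · intro g hg
    have hx : (⟨g, LinearMap.mem_ker.mpr hg⟩ : LinearMap.ker β) ∈
        Submodule.span R (Set.range c) := by rw [c.span_eq]; trivial
    have h2 := Submodule.mem_map_of_mem (f := (LinearMap.ker β).subtype) hx
    rw [Submodule.map_span] at h2
    have h3 : (LinearMap.ker β).subtype '' Set.range c =
        Set.range fun i => ((c i : G)) := by
      rw [← Set.range_comp]; rfl
    rw [h3] at h2
    exact h2

/-- if `k·α` and `k·α'` (with `α, α'` surjective, `k > 0`) have the same
mod-2 reduction, then there is an automorphism `θ` of `G` with `k·α'(θ g) = k·α g`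
for all `g`, and `k·α(θ g) ≡ k·α g (mod 2)` for all `g`. -/
theorem stmt3 (G : Type*) [AddCommGroup G] [Module ℤ G] [Module.Free ℤ G]
    [Module.Finite ℤ G] (k : ℤ) (hk : 0 < k) (α α' : G →ₗ[ℤ] ℤ)
    (hα : Function.Surjective α) (hα' : Function.Surjective α')
    (hmod2 : ∀ g : G, Int.ModEq 2 (k * α g) (k * α' g)) :
    ∃ θ : G ≃ₗ[ℤ] G,
      (∀ g : G, k * α' (θ g) = k * α g) ∧
      (∀ g : G, Int.ModEq 2 (k * α (θ g)) (k * α g)) := by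
  let bG := Module.Free.chooseBasis ℤ G
  obtain ⟨n, b⟩ := Submodule.basisOfPid bG (LinearMap.ker α)
  obtain ⟨n', b'⟩ := Submodule.basisOfPid bG (LinearMap.ker α')
  obtain ⟨w, hw0, hwli, hwsp⟩ := aux_fam α b
  obtain ⟨w', hw0', hwli', hwsp'⟩ := aux_fam α' b'
  obtain ⟨B, hB1, hB0⟩ := aux_basis α hα w hw0 hwli hwsp
  obtain ⟨B', hB1', hB0'⟩ := aux_basis α' hα' w' hw0' hwli' hwsp'
  have hnn : n = n' := by
    have hcard := Fintype.card_eq.mpr ⟨B.indexEquiv B'⟩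
    simpa using hcard
  subst hnn
  let θ : G ≃ₗ[ℤ] G := B.equiv B' (Equiv.refl _)
  have hθ : ∀ g, α' (θ g) = α g := by
    have : α'.comp (θ : G →ₗ[ℤ] G) = α := by
      apply B.ext
      intro o
      cases o with
      | none =>
        simp only [LinearMap.comp_apply, LinearEquiv.coe_coe]
        rw [show θ (B none) = B' none from B.equiv_apply none B' (Equiv.refl _), hB1', hB1]
      | some i =>
        simp only [LinearMap.comp_apply, LinearEquiv.coe_coe]
        rw [show θ (B (some i)) = B' (some i) from B.equiv_apply (some i) B' (Equiv.refl _),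
          hB0', hB0]
    intro g
    exact congrArg (fun f => f g) (congrArg DFunLike.coe this)
  refine ⟨θ, fun g => by rw [hθ], fun g => ?_⟩
  calc k * α (θ g) ≡ k * α' (θ g) [ZMOD 2] := hmod2 (θ g)
    _ = k * α g := by rw [hθ]
end

section
/- Let H be a finitely generated free abelian group, ω : H → ℤ a surjective homomorphism, and c₁ : H → ℤ a homomorphism. Let d(K) be the divisibility of c₁ (the nonnegative generator of the ideal c₁(H) ⊆ ℤ) and let d be the divisibility of the induced homomorphism [c₁] on H/ker-lift, i.e., the largest d ≥ 0 such that c₁ = d·R + γ·ω with R not a multiple of ω. Let A₀ ∈ H with ω(A₀) = 1 and Δ = c₁(A₀). Then gcd(Δ, d) = d(K); in particular, if d = 0 then Δ = ±d(K). -/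
/-- with `ω : H → ℤ` surjective, `d(K)` the divisibility of `c₁` (nonnegative
generator of the image ideal) and `d` the divisibility of the class of `c₁` modulo `ω`
(the greatest `d` with `c₁ = d·R + γ·ω`, `R` not a multiple of `ω`), and `Δ = c₁(A₀)` for
`A₀` with `ω(A₀) = 1`, one has `gcd(Δ, d) = d(K)`; in particular `d = 0 → Δ = ±d(K)`. -/
theorem stmt5 (H : Type*) [AddCommGroup H] [Module ℤ H] [Module.Free ℤ H]
    [Module.Finite ℤ H] (hrk : 2 ≤ Module.finrank ℤ H)
    (ω c₁ : H →ₗ[ℤ] ℤ) (hω : Function.Surjective ω)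
    (dK : ℕ) (hdK : LinearMap.range c₁ = Submodule.span ℤ {(dK : ℤ)})
    (d : ℕ)
    (hd : IsGreatest {m : ℕ | ∃ (R : H →ₗ[ℤ] ℤ) (γ : ℤ),
        (¬ ∃ t : ℤ, R = t • ω) ∧ c₁ = (m : ℤ) • R + γ • ω} d)
    (A₀ : H) (hA₀ : ω A₀ = 1) (Δ : ℤ) (hΔ : Δ = c₁ A₀) :
    Int.gcd Δ (d : ℤ) = dK ∧ (d = 0 → Δ = (dK : ℤ) ∨ Δ = -(dK : ℤ)) := by
  obtain ⟨⟨R, γ, hRω, hc⟩, hmax⟩ := hd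
  -- dK divides every value of c₁
  have hdvd : ∀ x : H, (dK : ℤ) ∣ c₁ x := by
    intro x
    have hx : c₁ x ∈ LinearMap.range c₁ := ⟨x, rfl⟩
    rw [hdK, Submodule.mem_span_singleton] at hx
    obtain ⟨a, ha⟩ := hx
    exact ⟨a, by rw [← ha]; rw [smul_eq_mul]; ring⟩
  have hdvdΔ : (dK : ℤ) ∣ Δ := hΔ ▸ hdvd A₀
  -- dK ∣ d
  have hdvdd : (dK : ℤ) ∣ (d : ℤ) := by
    rcases Nat.eq_zero_or_pos d with hd0 | hdpos
    · simp [hd0]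
    · -- image of R on ker ω is principal
      set J : Submodule ℤ ℤ := Submodule.map R (LinearMap.ker ω) with hJ
      obtain ⟨g, hg⟩ := (inferInstance : J.IsPrincipal).principal
      have hgJ : ∀ x : H, ω x = 0 → g ∣ R x := by
        intro x hx
        have : R x ∈ J := ⟨x, by simpa [LinearMap.mem_ker] using hx, rfl⟩
        rw [hg, Submodule.mem_span_singleton] at this
        obtain ⟨a, ha⟩ := this
        exact ⟨a, by rw [← ha]; rw [smul_eq_mul]; ring⟩
      have hgmem : ∃ x : H, ω x = 0 ∧ R x = g := by
        have : g ∈ J := by rw [hg]; exact Submodule.mem_span_singleton_self g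
        obtain ⟨x, hx, hx'⟩ := this
        exact ⟨x, by simpa [LinearMap.mem_ker] using hx, hx'⟩
      -- g ≠ 0, else R would be a multiple of ω
      have hg0 : g ≠ 0 := by
        intro h0
        apply hRω
        refine ⟨R A₀, ?_⟩
        ext x
        have hker : ω (x - ω x • A₀) = 0 := by simp [hA₀]
        have := hgJ _ hker
        rw [h0] at this
        have hz : R (x - ω x • A₀) = 0 := zero_dvd_iff.mp this
        have hsm : R (ω x • A₀) = ω x * R A₀ := by simp
        simp only [LinearMap.smul_apply, smul_eq_mul, map_sub, hsm] at hz ⊢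
        linarith
      set e : ℕ := g.natAbs with he
      have he0 : (e : ℤ) ≠ 0 := by
        simpa [he, Int.natAbs_eq_zero] using hg0
      have heJ : ∀ x : H, ω x = 0 → (e : ℤ) ∣ R x := by
        intro x hx
        exact (Int.natAbs_dvd.mpr (hgJ x hx))
      have hemem : ∃ x : H, ω x = 0 ∧ R x = (e : ℤ) := by
        obtain ⟨x, hx, hx'⟩ := hgmem
        rcases Int.natAbs_eq g with h | h
        · exact ⟨x, hx, by rw [hx', h]⟩
        · exact ⟨-x, by simp [hx], by rw [map_neg, hx', h]; ring⟩
      obtain ⟨x₀, hx₀ω, hx₀⟩ := hemem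
      -- key divisibility for defining R'
      have hkey : ∀ x : H, (e : ℤ) ∣ (R x - ω x * R A₀) := by
        intro x
        have hker : ω (x - ω x • A₀) = 0 := by simp [hA₀]
        have := heJ _ hker
        have hsm : R (x - ω x • A₀) = R x - ω x * R A₀ := by simp
        rwa [hsm] at this
      have hmul : ∀ x : H, (e : ℤ) * ((R x - ω x * R A₀) / (e : ℤ)) = R x - ω x * R A₀ :=
        fun x => Int.mul_ediv_cancel' (hkey x)
      let R' : H →ₗ[ℤ] ℤ :=
        { toFun := fun x => (R x - ω x * R A₀) / (e : ℤ)
          map_add' := by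
            intro x y
            apply mul_left_cancel₀ he0
            rw [mul_add, hmul, hmul, hmul]
            simp only [map_add]
            ring
          map_smul' := by
            intro m x
            apply mul_left_cancel₀ he0
            simp only [RingHom.id_apply, smul_eq_mul]
            rw [hmul]
            rw [mul_left_comm, hmul]
            simp only [map_smul, smul_eq_mul]
            ring }
      have hR'x₀ : R' x₀ = 1 := by
        show (R x₀ - ω x₀ * R A₀) / (e : ℤ) = 1
        rw [hx₀, hx₀ω]
        simp only [zero_mul, sub_zero]
        exact Int.ediv_self he0
      have hR'ω : ¬ ∃ t : ℤ, R' = t • ω := by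
        rintro ⟨t, ht⟩
        have := congrArg (fun f : H →ₗ[ℤ] ℤ => f x₀) ht
        simp only [hR'x₀, LinearMap.smul_apply, smul_eq_mul, hx₀ω, mul_zero] at this
        exact one_ne_zero this
      have hc' : c₁ = ((d * e : ℕ) : ℤ) • R' + (γ + d * R A₀) • ω := by
        ext x
        have h1 : c₁ x = (d : ℤ) * R x + γ * ω x := by
          rw [hc]; simp [smul_eq_mul]
        have h2 : (e : ℤ) * R' x = R x - ω x * R A₀ := hmul x
        simp only [LinearMap.add_apply, LinearMap.smul_apply, smul_eq_mul, h1]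
        push_cast
        nlinarith [h2]
      have hdemem : d * e ∈ {m : ℕ | ∃ (R : H →ₗ[ℤ] ℤ) (γ : ℤ),
          (¬ ∃ t : ℤ, R = t • ω) ∧ c₁ = (m : ℤ) • R + γ • ω} :=
        ⟨R', γ + d * R A₀, hR'ω, hc'⟩
      have hle : d * e ≤ d := hmax hdemem
      have he1 : e = 1 := by
        have he1' : 1 ≤ e := Nat.one_le_iff_ne_zero.mpr (by exact_mod_cast he0)
        nlinarith
      -- then c₁ x₀ = d
      have : c₁ x₀ = (d : ℤ) := by
        have h1 : c₁ x₀ = (d : ℤ) * R x₀ + γ * ω x₀ := by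
          rw [hc]; simp [smul_eq_mul]
        rw [h1, hx₀, hx₀ω, he1]
        push_cast
        ring
      exact this ▸ hdvd x₀
  -- gcd Δ d divides dK
  have hγ : γ = Δ - (d : ℤ) * R A₀ := by
    have h1 : c₁ A₀ = (d : ℤ) * R A₀ + γ * ω A₀ := by
      rw [hc]; simp [smul_eq_mul]
    rw [hA₀, mul_one] at h1
    rw [hΔ, h1]; ring
  have hgcd_dvd : ((Int.gcd Δ (d : ℤ) : ℕ) : ℤ) ∣ (dK : ℤ) := by
    have hmem : (dK : ℤ) ∈ LinearMap.range c₁ := by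
      rw [hdK]; exact Submodule.mem_span_singleton_self _
    obtain ⟨y, hy⟩ := hmem
    have h1 : c₁ y = (d : ℤ) * R y + γ * ω y := by
      rw [hc]; simp [smul_eq_mul]
    have h2 : (dK : ℤ) = (d : ℤ) * (R y - R A₀ * ω y) + Δ * ω y := by
      rw [← hy, h1, hγ]; ring
    rw [h2]
    exact dvd_add ((Int.gcd_dvd_right Δ (d : ℤ)).mul_right _) ((Int.gcd_dvd_left Δ (d : ℤ)).mul_right _)
  have hmain : Int.gcd Δ (d : ℤ) = dK := by
    have h1 : Int.gcd Δ (d : ℤ) ∣ dK := by exact_mod_cast hgcd_dvd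
    have h2 : dK ∣ Int.gcd Δ (d : ℤ) := by
      have := Int.dvd_gcd hdvdΔ hdvdd
      exact_mod_cast this
    exact Nat.dvd_antisymm h1 h2
  refine ⟨hmain, fun h0 => ?_⟩
  subst h0
  simp only [Nat.cast_zero, Int.gcd_zero_right] at hmain
  rcases Int.natAbs_eq Δ with h | h
  · left; rw [h, hmain]
  · right; rw [h, hmain]
end

section
/- Let d ≥ 4, and let k, k' be integers with 1 ≤ k, k', both dividing d in the sense k = gcd(Δ,d), k' = gcd(Δ',d) for some Δ, Δ', and suppose at least one of k, k' is ≥ 4. Then the following are equivalent: (1) there exists b with 0 ≤ b < d such that exactly one of the statements 'k divides one of b−1, b, b+1' and 'k' divides one of b−1, b, b+1' holds; (2) k ≠ k'. -/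
private lemma aux1 (d : ℤ) (k k' : ℕ) (hd : 4 ≤ d)
    (h4 : 4 ≤ k) (hk'1 : 1 ≤ k') (hk'3 : k' ≤ 3) :
    ∃ b : ℤ, 0 ≤ b ∧ b < d ∧
      ¬((k : ℤ) ∣ b - 1 ∨ (k : ℤ) ∣ b ∨ (k : ℤ) ∣ b + 1) ∧
      ((k' : ℤ) ∣ b - 1 ∨ (k' : ℤ) ∣ b ∨ (k' : ℤ) ∣ b + 1) := by
  refine ⟨2, by norm_num, by omega, ?_, ?_⟩
  · have hk4 : (4 : ℤ) ≤ k := by exact_mod_cast h4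
    rintro (h | h | h) <;>
      · have := Int.le_of_dvd (by norm_num) h
        omega
  · interval_cases k' <;> norm_num

private lemma aux2 (d : ℤ) (k k' : ℕ) (hd : 4 ≤ d)
    (hkd : (k : ℤ) ∣ d) (hk'd : (k' : ℤ) ∣ d) (h4 : 4 ≤ k) (hlt : k < k') :
    ∃ b : ℤ, 0 ≤ b ∧ b < d ∧
      ((k : ℤ) ∣ b - 1 ∨ (k : ℤ) ∣ b ∨ (k : ℤ) ∣ b + 1) ∧
      ¬((k' : ℤ) ∣ b - 1 ∨ (k' : ℤ) ∣ b ∨ (k' : ℤ) ∣ b + 1) := by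
  have hk4 : (4 : ℤ) ≤ k := by exact_mod_cast h4
  have hltZ : (k : ℤ) < k' := by exact_mod_cast hlt
  have hk'le : (k' : ℤ) ≤ d := Int.le_of_dvd (by omega) hk'd
  by_cases hc : k + 1 = k'
  · -- k' = k + 1 : use b = 2k
    have hcZ : (k : ℤ) + 1 = k' := by exact_mod_cast hc
    have hcop : IsCoprime (k : ℤ) (k' : ℤ) := by
      rw [Int.isCoprime_iff_gcd_eq_one, Int.gcd_natCast_natCast, ← hc]
      exact Nat.coprime_self_add_right.mpr (Nat.coprime_one_right k)
    have hmul : (k : ℤ) * k' ∣ d := hcop.mul_dvd hkd hk'd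
    have hmulle : (k : ℤ) * k' ≤ d := Int.le_of_dvd (by omega) hmul
    have h2k : (2 : ℤ) * k < (k : ℤ) * k' := by nlinarith
    have h2 : (k' : ℤ) ∣ 2 * k + 2 := ⟨2, by omega⟩
    refine ⟨2 * k, by omega, by omega, Or.inr (Or.inl ⟨2, by ring⟩), ?_⟩
    rintro (h | h | h)
    · have h' := dvd_sub h2 h
      have e : (2 * (k : ℤ) + 2) - (2 * k - 1) = 3 := by ring
      rw [e] at h'
      have := Int.le_of_dvd (by norm_num) h'
      omega
    · have h' := dvd_sub h2 h
      have e : (2 * (k : ℤ) + 2) - (2 * k) = 2 := by ring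
      rw [e] at h'
      have := Int.le_of_dvd (by norm_num) h'
      omega
    · have h' := dvd_sub h2 h
      have e : (2 * (k : ℤ) + 2) - (2 * k + 1) = 1 := by ring
      rw [e] at h'
      have := Int.le_of_dvd (by norm_num) h'
      omega
  · -- k + 1 < k' : use b = k
    have hcZ : (k : ℤ) + 1 < k' := by
      have : k + 1 < k' := by omega
      exact_mod_cast this
    refine ⟨k, by omega, by omega, Or.inr (Or.inl dvd_rfl), ?_⟩
    rintro (h | h | h) <;>
      · have := Int.le_of_dvd (by omega) h
        omega

/-- Lemma 7.8: for `d ≥ 4`, `k = gcd(Δ,d)`, `k' = gcd(Δ',d)` with at least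
one of them `≥ 4`: there is `b` with `0 ≤ b < d` for which exactly one of
`k` / `k'` divides one of `b-1, b, b+1`, iff `k ≠ k'`. -/
theorem stmt9 (d Δ Δ' : ℤ) (hd : 4 ≤ d) (k k' : ℕ)
    (hk : k = Int.gcd Δ d) (hk' : k' = Int.gcd Δ' d)
    (hk1 : 1 ≤ k) (hk'1 : 1 ≤ k') (h4 : 4 ≤ k ∨ 4 ≤ k') :
    (∃ b : ℤ, 0 ≤ b ∧ b < d ∧
      Xor' ((k : ℤ) ∣ b - 1 ∨ (k : ℤ) ∣ b ∨ (k : ℤ) ∣ b + 1)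
           ((k' : ℤ) ∣ b - 1 ∨ (k' : ℤ) ∣ b ∨ (k' : ℤ) ∣ b + 1)) ↔ k ≠ k' := by
  have hkd : (k : ℤ) ∣ d := by rw [hk]; exact Int.gcd_dvd_right Δ d
  have hk'd : (k' : ℤ) ∣ d := by rw [hk']; exact Int.gcd_dvd_right Δ' d
  constructor
  · rintro ⟨b, _, _, hx⟩ he
    rw [he] at hx
    rcases hx with ⟨h1, h2⟩ | ⟨h1, h2⟩ <;> exact h2 h1
  · intro hne
    rcases h4 with h4 | h4
    · rcases lt_trichotomy k' 4 with h | h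
      · obtain ⟨b, hb0, hbd, hP, hQ⟩ := aux1 d k k' hd h4 hk'1 (by omega)
        exact ⟨b, hb0, hbd, Or.inr ⟨hQ, hP⟩⟩
      · rcases lt_or_gt_of_ne hne with hlt | hlt
        · obtain ⟨b, hb0, hbd, hP, hQ⟩ := aux2 d k k' hd hkd hk'd h4 hlt
          exact ⟨b, hb0, hbd, Or.inl ⟨hP, hQ⟩⟩
        · obtain ⟨b, hb0, hbd, hP, hQ⟩ := aux2 d k' k hd hk'd hkd (by omega) hlt
          exact ⟨b, hb0, hbd, Or.inr ⟨hP, hQ⟩⟩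
    · rcases lt_trichotomy k 4 with h | h
      · obtain ⟨b, hb0, hbd, hP, hQ⟩ := aux1 d k' k hd h4 hk1 (by omega)
        exact ⟨b, hb0, hbd, Or.inl ⟨hQ, hP⟩⟩
      · rcases lt_or_gt_of_ne hne with hlt | hlt
        · obtain ⟨b, hb0, hbd, hP, hQ⟩ := aux2 d k k' hd hkd hk'd (by omega) hlt
          exact ⟨b, hb0, hbd, Or.inl ⟨hP, hQ⟩⟩
        · obtain ⟨b, hb0, hbd, hP, hQ⟩ := aux2 d k' k hd hk'd hkd h4 hlt
          exact ⟨b, hb0, hbd, Or.inr ⟨hP, hQ⟩⟩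
end

section
/- Let d ≥ 1 and Δ, Δ' be integers with gcd(Δ, d) = gcd(Δ', d). Then there exists a bijection ψ : ℕ>0 × {−1,0,1} → ℕ>0 × {−1,0,1} such that for all (m, ε), one has −ε + Δ·m ≡ −ε' + Δ'·m' (mod d) where (m', ε') = ψ(m, ε). -/
/-- If `gcd(Δ,d) = gcd(Δ',d)` then there is an invertible `u` mod `d` with `Δ'·u ≡ Δ`. -/
lemma stmt11_exists_unit (d Δ Δ' : ℤ) (hd : 1 ≤ d) (hgcd : Int.gcd Δ d = Int.gcd Δ' d) :
    ∃ u u' : ℤ, u * u' ≡ 1 [ZMOD d] ∧ Δ' * u ≡ Δ [ZMOD d] := by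
  set g : ℤ := (Int.gcd Δ d : ℤ) with hg
  have hdne : d ≠ 0 := by omega
  have hgpos : 0 < Int.gcd Δ d := Int.gcd_pos_of_ne_zero_right _ hdne
  have hgpos' : 0 < Int.gcd Δ' d := by rwa [← hgcd]
  have hgd : g ∣ d := Int.gcd_dvd_right _ _
  have hgΔ : g ∣ Δ := Int.gcd_dvd_left _ _
  have hgΔ' : g ∣ Δ' := by rw [hg, hgcd]; exact Int.gcd_dvd_left _ _
  set a : ℤ := Δ / g with ha
  set a' : ℤ := Δ' / g with ha'
  set e : ℤ := d / g with he
  have hae : Int.gcd a e = 1 := Int.gcd_div_gcd_div_gcd hgpos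
  have ha'e : Int.gcd a' e = 1 := by
    have := Int.gcd_div_gcd_div_gcd (i := Δ') (j := d) hgpos'
    rwa [← hgcd] at this
  have hΔ : g * a = Δ := Int.mul_ediv_cancel' hgΔ
  have hΔ' : g * a' = Δ' := Int.mul_ediv_cancel' hgΔ'
  have hde : g * e = d := Int.mul_ediv_cancel' hgd
  have hgpos2 : 0 < g := by rw [hg]; exact_mod_cast hgpos
  have hepos : 0 < e := by
    rcases lt_trichotomy e 0 with h | h | h
    · nlinarith
    · exfalso; rw [h, mul_zero] at hde; omega
    · exact h
  set en : ℕ := e.toNat with hen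
  set dn : ℕ := d.toNat with hdn
  have heE : (en : ℤ) = e := Int.toNat_of_nonneg hepos.le
  have hdE : (dn : ℤ) = d := Int.toNat_of_nonneg (by omega)
  have hdvd : en ∣ dn := by
    have : (en : ℤ) ∣ (dn : ℤ) := by rw [heE, hdE]; exact ⟨g, by linarith [hde.symm]⟩
    exact_mod_cast this
  have hdnz : NeZero dn := ⟨by omega⟩
  have henz : NeZero en := ⟨by omega⟩
  -- `a` and `a'` are units mod `en`
  have unit_of : ∀ b : ℤ, Int.gcd b e = 1 → IsUnit (b : ZMod en) := by
    intro b hb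
    obtain ⟨x, y, hxy⟩ := Int.isCoprime_iff_gcd_eq_one.mpr hb
    have : (x : ZMod en) * b + y * e = 1 := by exact_mod_cast congrArg (Int.cast : ℤ → ZMod en) hxy
    have he0 : (e : ZMod en) = 0 := by
      rw [← heE]; exact_mod_cast ZMod.natCast_self en
    refine IsUnit.of_mul_eq_one (a := (b : ZMod en)) (x : ZMod en) ?_
    rw [mul_comm]; rw [he0, mul_zero, add_zero] at this; exact this
  have hA := unit_of a hae
  have hA' := unit_of a' ha'e
  set va := hA.unit with hva
  set va' := hA'.unit with hva'
  obtain ⟨U, hU⟩ := ZMod.unitsMap_surjective hdvd (va * va'⁻¹)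
  refine ⟨((U : ZMod dn).val : ℤ), (((U⁻¹ : (ZMod dn)ˣ) : ZMod dn).val : ℤ), ?_, ?_⟩
  · rw [← hdE, ← ZMod.intCast_eq_intCast_iff]
    push_cast [ZMod.natCast_val, ZMod.cast_id]
    exact_mod_cast U.mul_inv
  · -- reduce to mod e statement
    have key : a' * ((U : ZMod dn).val : ℤ) ≡ a [ZMOD e] := by
      rw [← heE, ← ZMod.intCast_eq_intCast_iff]
      have hval : (((U : ZMod dn).val : ℕ) : ZMod en) = ((U : ZMod dn).cast : ZMod en) :=
        ZMod.natCast_val _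
      push_cast
      rw [hval]
      have hcast : ((U : ZMod dn).cast : ZMod en) = ((va : ZMod en) * ((va'⁻¹ : (ZMod en)ˣ) : ZMod en)) := by
        have := congrArg (fun w : (ZMod en)ˣ => (w : ZMod en)) hU
        simpa [ZMod.unitsMap_def] using this
      rw [hcast]
      have hva'c : (a' : ZMod en) = (va' : ZMod en) := (hA'.unit_spec).symm
      have hvac : (a : ZMod en) = (va : ZMod en) := (hA.unit_spec).symm
      rw [hva'c, hvac]
      calc (va' : ZMod en) * ((va : ZMod en) * ((va'⁻¹ : (ZMod en)ˣ) : ZMod en))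
          = (va : ZMod en) * ((va' : ZMod en) * ((va'⁻¹ : (ZMod en)ˣ) : ZMod en)) := by ring
        _ = (va : ZMod en) := by rw [va'.mul_inv, mul_one]
    have := key.mul_left' (c := g)
    rw [hde] at this
    calc Δ' * ((U : ZMod dn).val : ℤ) = g * (a' * ((U : ZMod dn).val : ℤ)) := by
          rw [← hΔ']; ring
      _ ≡ g * a [ZMOD d] := this
      _ = Δ := hΔ

/-- The shuffle map: `m ↦ d·((m−1)/d) + ((u·m−1) % d) + 1`. -/
def stmt11_f (d u m : ℤ) : ℤ := d * ((m - 1) / d) + (u * m - 1) % d + 1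

lemma stmt11_f_pos (d u m : ℤ) (hd : 1 ≤ d) (hm : 0 < m) : 0 < stmt11_f d u m := by
  have h1 : 0 ≤ (m - 1) / d := Int.ediv_nonneg (by omega) (by omega)
  have h2 : 0 ≤ (u * m - 1) % d := Int.emod_nonneg _ (by omega)
  have : 0 ≤ d * ((m - 1) / d) := by positivity
  unfold stmt11_f; omega

lemma stmt11_f_modeq (d u m : ℤ) : stmt11_f d u m ≡ u * m [ZMOD d] := by
  have h1 : (u * m - 1) % d ≡ u * m - 1 [ZMOD d] := Int.emod_emod_of_dvd _ dvd_rfl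
  calc stmt11_f d u m = d * ((m - 1) / d) + ((u * m - 1) % d + 1) := by unfold stmt11_f; ring
    _ ≡ 0 + (u * m - 1 + 1) [ZMOD d] := Int.ModEq.add (Int.modEq_zero_iff_dvd.mpr ⟨_, rfl⟩) (h1.add_right 1)
    _ = u * m := by ring

lemma stmt11_f_inv (d u u' m : ℤ) (hd : 1 ≤ d) (hm : 0 < m)
    (huu' : u * u' ≡ 1 [ZMOD d]) : stmt11_f d u' (stmt11_f d u m) = m := by
  set q : ℤ := (m - 1) / d with hq
  set r : ℤ := (u * m - 1) % d with hr
  have hr0 : 0 ≤ r := Int.emod_nonneg _ (by omega)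
  have hrd : r < d := Int.emod_lt_of_pos _ (by omega)
  have hF : stmt11_f d u m = d * q + r + 1 := rfl
  have hdiv : (stmt11_f d u m - 1) / d = q := by
    rw [hF]
    have : d * q + r + 1 - 1 = r + q * d := by ring
    rw [this, Int.add_mul_ediv_right _ _ (by omega : d ≠ 0),
      Int.ediv_eq_zero_of_lt hr0 hrd, zero_add]
  have hmod : (u' * stmt11_f d u m - 1) % d = (m - 1) % d := by
    have h1 : u' * stmt11_f d u m ≡ u' * (u * m) [ZMOD d] :=
      (stmt11_f_modeq d u m).mul_left u'
    have h2 : u' * (u * m) ≡ 1 * m [ZMOD d] := by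
      have : u' * u ≡ 1 [ZMOD d] := by rwa [mul_comm] at huu'
      calc u' * (u * m) = (u' * u) * m := by ring
        _ ≡ 1 * m [ZMOD d] := this.mul_right m
    have : u' * stmt11_f d u m - 1 ≡ m - 1 [ZMOD d] := by
      have := (h1.trans h2)
      rw [one_mul] at this
      exact this.sub_right 1
    exact this
  show d * ((stmt11_f d u m - 1) / d) + (u' * stmt11_f d u m - 1) % d + 1 = m
  rw [hdiv, hmod, hq]
  have := Int.mul_ediv_add_emod (m - 1) d
  omega

/-- core of Lemma 7.10: if `gcd(Δ,d) = gcd(Δ',d)` then there is a bijection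
`ψ` of `{(m,ε) : m ≥ 1, ε ∈ {-1,0,1}}` with `-ε + Δ·m ≡ -ε' + Δ'·m' (mod d)` where
`(m',ε') = ψ(m,ε)`. -/
theorem stmt11 (d Δ Δ' : ℤ) (hd : 1 ≤ d) (hgcd : Int.gcd Δ d = Int.gcd Δ' d) :
    ∃ ψ : {p : ℤ × ℤ // 0 < p.1 ∧ (p.2 = -1 ∨ p.2 = 0 ∨ p.2 = 1)} ≃
          {p : ℤ × ℤ // 0 < p.1 ∧ (p.2 = -1 ∨ p.2 = 0 ∨ p.2 = 1)},
      ∀ p, Int.ModEq d (-p.val.2 + Δ * p.val.1)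
        (-(ψ p).val.2 + Δ' * (ψ p).val.1) := by
  obtain ⟨u, u', huu', hΔu⟩ := stmt11_exists_unit d Δ Δ' hd hgcd
  have hu'u : u' * u ≡ 1 [ZMOD d] := by rwa [mul_comm] at huu'
  refine ⟨⟨fun p => ⟨(stmt11_f d u p.1.1, p.1.2), stmt11_f_pos d u _ hd p.2.1, p.2.2⟩,
           fun p => ⟨(stmt11_f d u' p.1.1, p.1.2), stmt11_f_pos d u' _ hd p.2.1, p.2.2⟩,
           ?_, ?_⟩, ?_⟩
  · intro p
    ext : 2
    · exact stmt11_f_inv d u u' p.1.1 hd p.2.1 huu'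
    · rfl
  · intro p
    ext : 2
    · exact stmt11_f_inv d u' u p.1.1 hd p.2.1 hu'u
    · rfl
  · intro p
    have h1 : Δ' * stmt11_f d u p.1.1 ≡ Δ * p.1.1 [ZMOD d] := by
      calc Δ' * stmt11_f d u p.1.1 ≡ Δ' * (u * p.1.1) [ZMOD d] :=
            (stmt11_f_modeq d u p.1.1).mul_left Δ'
        _ = (Δ' * u) * p.1.1 := by ring
        _ ≡ Δ * p.1.1 [ZMOD d] := hΔu.mul_right _
    exact (h1.symm.add_left _)
end

section
/- Let H be a finitely generated free abelian group with a fixed basis (e₁, …, eₙ), n ≥ 2. Suppose K = k·e₁* and ω = ω₁·e₁* + ω₂·e₂* are elements of Hom(H, ℤ) (where eᵢ* is the dual basis), with ω₂ ≠ 0, and suppose σ = σ₁·e₁* + σ₂·e₂* with gcd(σ₁, σ₂) = 1. Then the largest integer r ≥ 1 such that K ≡ γ·σ (mod r·Hom(H,ℤ)) for some γ ∈ ℤ, i.e., such that K = r·R + γ·σ for some R ∈ Hom(H,ℤ) and γ ∈ ℤ with R not a multiple of σ, equals k·|σ₂|. -/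
/-- computation in Theorem 8.2: with `K = k·e₁*`, `ω = ω₁e₁* + ω₂e₂*`
(`ω₂ ≠ 0`) and `σ = σ₁e₁* + σ₂e₂*` indivisible (`gcd(σ₁,σ₂) = 1`, `σ₂ ≠ 0`), the largest
`r ≥ 1` with `K = r·R + γ·σ` for some `R` not a multiple of `σ` equals `k·|σ₂|`. -/
theorem stmt13 (H : Type*) [AddCommGroup H] [Module ℤ H] (n : ℕ) (hn : 2 ≤ n)
    (e : Module.Basis (Fin n) ℤ H) (k : ℤ) (hk : 1 ≤ k)
    (ω₁ ω₂ σ₁ σ₂ : ℤ) (hω₂ : ω₂ ≠ 0) (hσ₂ : σ₂ ≠ 0) (hcop : Int.gcd σ₁ σ₂ = 1)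
    (K ω σ : H →ₗ[ℤ] ℤ)
    (hK : K = k • e.coord ⟨0, by omega⟩)
    (hω : ω = ω₁ • e.coord ⟨0, by omega⟩ + ω₂ • e.coord ⟨1, by omega⟩)
    (hσ : σ = σ₁ • e.coord ⟨0, by omega⟩ + σ₂ • e.coord ⟨1, by omega⟩) :
    IsGreatest {r : ℕ | 1 ≤ r ∧ ∃ (R : H →ₗ[ℤ] ℤ) (γ : ℤ),
        (¬ ∃ t : ℤ, R = t • σ) ∧ K = (r : ℤ) • R + γ • σ}
      (k.natAbs * σ₂.natAbs) := by
  set i0 : Fin n := ⟨0, by omega⟩ with hi0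
  set i1 : Fin n := ⟨1, by omega⟩ with hi1
  have h01 : i0 ≠ i1 := by simp [hi0, hi1, Fin.ext_iff]
  have hc00 : e.coord i0 (e i0) = 1 := by simp
  have hc11 : e.coord i1 (e i1) = 1 := by simp
  have hc01 : e.coord i0 (e i1) = 0 := by
    simp [Module.Basis.coord_apply, Finsupp.single_apply, h01.symm]
  have hc10 : e.coord i1 (e i0) = 0 := by
    simp [Module.Basis.coord_apply, Finsupp.single_apply, h01]
  have hK0 : K (e i0) = k := by rw [hK]; simp [hc00]
  have hK1 : K (e i1) = 0 := by rw [hK]; simp [hc01]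
  have hσ0 : σ (e i0) = σ₁ := by rw [hσ]; simp [hc00, hc10]
  have hσ1 : σ (e i1) = σ₂ := by rw [hσ]; simp [hc01, hc11]
  -- the "not a multiple of σ" condition is automatic
  have key : ∀ (r : ℤ) (R : H →ₗ[ℤ] ℤ) (γ : ℤ), K = r • R + γ • σ →
      ¬ ∃ t : ℤ, R = t • σ := by
    rintro r R γ hEq ⟨t, rfl⟩
    have hEq' : K = (r * t + γ) • σ := by
      rw [hEq, smul_smul, add_smul]
    have h1 : (0 : ℤ) = (r * t + γ) * σ₂ := by
      have := congrArg (fun f : H →ₗ[ℤ] ℤ => f (e i1)) hEq'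
      simpa [hK1, hσ1] using this
    have h2 : (k : ℤ) = (r * t + γ) * σ₁ := by
      have := congrArg (fun f : H →ₗ[ℤ] ℤ => f (e i0)) hEq'
      simpa [hK0, hσ0] using this
    have : r * t + γ = 0 := by
      rcases mul_eq_zero.mp h1.symm with h | h
      · exact h
      · exact absurd h hσ₂
    rw [this, zero_mul] at h2
    omega
  constructor
  · -- membership
    refine ⟨Nat.one_le_iff_ne_zero.mpr
      (Nat.mul_ne_zero (Int.natAbs_ne_zero.mpr (by omega)) (Int.natAbs_ne_zero.mpr hσ₂)), ?_⟩
    set a := Int.gcdA σ₁ σ₂ with ha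
    set b := Int.gcdB σ₁ σ₂ with hb
    have hbez : σ₁ * a + σ₂ * b = 1 := by
      have := Int.gcd_eq_gcd_ab σ₁ σ₂
      rw [hcop] at this
      exact_mod_cast this.symm
    have hks : |k| * |σ₂| * σ₂.sign = k * σ₂ := by
      rw [mul_assoc, abs_of_pos (by omega : (0:ℤ) < k), mul_comm |σ₂|, Int.sign_mul_abs]
    have hmain : K = ((k.natAbs * σ₂.natAbs : ℕ) : ℤ) •
        ((σ₂.sign * b) • e.coord i0 - (σ₂.sign * a) • e.coord i1) + (k * a) • σ := by
      rw [hK, hσ]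
      match_scalars
      · linear_combination (-b) * hks - k * hbez
      · linear_combination a * hks
    exact ⟨(σ₂.sign * b) • e.coord i0 - (σ₂.sign * a) • e.coord i1, k * a,
      key _ _ _ hmain, hmain⟩
  · -- upper bound
    rintro r ⟨hr1, R, γ, -, hEq⟩
    have h1 : (k : ℤ) = r * R (e i0) + γ * σ₁ := by
      have := congrArg (fun f : H →ₗ[ℤ] ℤ => f (e i0)) hEq
      simpa [hK0, hσ0] using this
    have h2 : (0 : ℤ) = r * R (e i1) + γ * σ₂ := by
      have := congrArg (fun f : H →ₗ[ℤ] ℤ => f (e i1)) hEq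
      simpa [hK1, hσ1] using this
    have hdvd : (r : ℤ) ∣ k * σ₂ := by
      refine ⟨R (e i0) * σ₂ - R (e i1) * σ₁, ?_⟩
      linear_combination σ₂ * h1 - σ₁ * h2
    have hdvd' : r ∣ (k * σ₂).natAbs := Int.natAbs_dvd_natAbs.mpr (by simpa using hdvd)
    have hpos : 0 < (k * σ₂).natAbs := by
      have : k * σ₂ ≠ 0 := mul_ne_zero (by omega) hσ₂
      exact Int.natAbs_pos.mpr this
    have := Nat.le_of_dvd hpos hdvd'
    rwa [Int.natAbs_mul] at this
end
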